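/- Monotonicity of the mean near the extremes: with the setting of the mean evolution identity, if at time t the solution satisfies M(t) > 2k-1, then M'(t) ≥ 0; and if M(t) < 1, then M'(t) ≤ 0. Consequently, the sets {M > 2k-1} and {M < 1} are forward-invariant for the flow. -/
import Mathlib

lemma aux_invariant (M M' : ℝ → ℝ) (c : ℝ)
    (hderiv : ∀ t ≥ (0:ℝ), HasDerivAt M (M' t) t)
    (h : ∀ t ≥ (0:ℝ), c < M t → 0 ≤ M' t) (h0 : c < M 0) :
    ∀ t ≥ (0:ℝ), c < M t := by
  intro t ht
  by_contra hcon
  push_neg at hcon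
  set S : Set ℝ := Set.Icc 0 t ∩ M ⁻¹' Set.Iic c with hS
  have hcont : ContinuousOn M (Set.Icc 0 t) := fun s hs =>
    ((hderiv s hs.1).continuousAt).continuousWithinAt
  have hclosed : IsClosed S :=
    hcont.preimage_isClosed_of_isClosed isClosed_Icc isClosed_Iic
  have hne : S.Nonempty := ⟨t, ⟨ht, le_refl t⟩, hcon⟩
  have hbdd : BddBelow S := ⟨0, fun s hs => hs.1.1⟩
  set u := sInf S with hu
  have huS : u ∈ S := hclosed.csInf_mem hne hbdd
  have hu0 : 0 ≤ u := huS.1.1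
  have huM : M u ≤ c := huS.2
  have hupos : 0 < u := by
    rcases lt_or_eq_of_le hu0 with h' | h'
    · exact h'
    · exact absurd h0 (not_lt.2 (h' ▸ huM))
  have hmono : MonotoneOn M (Set.Icc 0 u) := by
    apply monotoneOn_of_deriv_nonneg (convex_Icc 0 u)
    · exact hcont.mono (Set.Icc_subset_Icc_right huS.1.2)
    · intro x hx
      rw [interior_Icc] at hx
      exact ((hderiv x hx.1.le).differentiableAt).differentiableWithinAt
    · intro x hx
      rw [interior_Icc] at hx
      rw [(hderiv x hx.1.le).deriv]
      apply h x hx.1.le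
      by_contra hMx
      push_neg at hMx
      have hxS : x ∈ S := ⟨⟨hx.1.le, hx.2.le.trans huS.1.2⟩, hMx⟩
      exact absurd (csInf_le hbdd hxS) (not_le.2 hx.2)
  have := hmono ⟨le_refl 0, hu0⟩ ⟨hu0, le_refl u⟩ hu0
  linarith

theorem mean_monotone_near_extremes (k : ℕ) (hk : 1 ≤ k)
    (q : ℝ → ℕ → ℝ) (M M' : ℝ → ℝ)
    (hpos : ∀ t n, 0 ≤ q t n)
    (hMbound : ∀ t, 0 ≤ M t ∧ M t ≤ 2 * (k : ℝ))
    (hderiv : ∀ t ≥ (0 : ℝ), HasDerivAt M (M' t) t)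
    (hformula : ∀ t, M' t = 1 / (2 * (k : ℝ) ^ 2) *
      ∑ j ∈ Finset.Icc 1 (2 * k - 1), ((k : ℝ) * ((j : ℝ) + M t) - 2 * (k : ℝ) ^ 2) * q t j) :
    (∀ t ≥ (0 : ℝ), 2 * (k : ℝ) - 1 < M t → 0 ≤ M' t) ∧
    (∀ t ≥ (0 : ℝ), M t < 1 → M' t ≤ 0) ∧
    (2 * (k : ℝ) - 1 < M 0 → ∀ t ≥ (0 : ℝ), 2 * (k : ℝ) - 1 < M t) ∧
    (M 0 < 1 → ∀ t ≥ (0 : ℝ), M t < 1) := by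
  have hk' : (1:ℝ) ≤ (k:ℝ) := by exact_mod_cast hk
  have hA : ∀ t, 2 * (k : ℝ) - 1 < M t → 0 ≤ M' t := by
    intro t hM
    rw [hformula t]
    apply mul_nonneg (by positivity)
    apply Finset.sum_nonneg
    intro j hj
    rw [Finset.mem_Icc] at hj
    have hj1 : (1:ℝ) ≤ (j:ℝ) := by exact_mod_cast hj.1
    have hcoeff : 0 ≤ (k : ℝ) * ((j : ℝ) + M t) - 2 * (k : ℝ) ^ 2 := by nlinarith
    exact mul_nonneg hcoeff (hpos t j)
  have hB : ∀ t, M t < 1 → M' t ≤ 0 := by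
    intro t hM
    rw [hformula t]
    rw [mul_nonpos_iff]
    left
    refine ⟨by positivity, ?_⟩
    apply Finset.sum_nonpos
    intro j hj
    rw [Finset.mem_Icc] at hj
    have hj2 : (j:ℝ) ≤ 2 * (k:ℝ) - 1 := by
      have h2k : 1 ≤ 2 * k := by omega
      have : (j:ℝ) ≤ ((2 * k - 1 : ℕ) : ℝ) := by exact_mod_cast hj.2
      rwa [Nat.cast_sub h2k, Nat.cast_mul, Nat.cast_ofNat, Nat.cast_one] at this
    have hcoeff : (k : ℝ) * ((j : ℝ) + M t) - 2 * (k : ℝ) ^ 2 ≤ 0 := by nlinarith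
    exact mul_nonpos_iff.mpr (Or.inr ⟨hcoeff, hpos t j⟩)
  refine ⟨fun t _ => hA t, fun t _ => hB t, ?_, ?_⟩
  · intro h0
    exact aux_invariant M M' (2 * (k:ℝ) - 1) hderiv (fun t ht => hA t) h0
  · intro h0 t ht
    have := aux_invariant (fun s => -M s) (fun s => -M' s) (-1)
      (fun s hs => (hderiv s hs).neg)
      (fun s _ hs => by
        have hs' : -1 < -M s := hs
        have := hB s (by linarith)
        show (0:ℝ) ≤ -M' s
        linarith)
      (by simpa using h0) t ht
    simpa using this
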